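/- (Reversibility of multiplicative measures) Fix n ≥ 1 and η = (k_1,…,k_n) ∈ Ω_n. (Case i ≠ j) Let 1 ≤ i, j with i ≠ j, k_i ≥ 1, k_j ≥ 1, and let η^{(i,j)} ∈ Ω_n be obtained from η by replacing k_i by k_i − 1, k_j by k_j − 1, and k_{i+j} by k_{i+j} + 1. If u_c, u_f > 0 satisfy u_c/u_f = a_{k_i−1}^{(i)} a_{k_j−1}^{(j)} a_{k_{i+j}+1}^{(i+j)} / (a_{k_i}^{(i)} a_{k_j}^{(j)} a_{k_{i+j}}^{(i+j)}) (where all the a's appearing are positive), then the detailed balance condition μ_n(η)·u_c = μ_n(η^{(i,j)})·u_f holds. (Case i = j) Similarly, if k_i ≥ 2 and η^{(i,i)} is obtained by replacing k_i by k_i − 2 and k_{2i} by k_{2i} + 1, and u_c/u_f = a_{k_i−2}^{(i)} a_{k_{2i}+1}^{(2i)} / (a_{k_i}^{(i)} a_{k_{2i}}^{(2i)}), then μ_n(η)·u_c = μ_n(η^{(i,i)})·u_f. -/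
import Mathlib


open Finset Filter Topology

/-- The partition function `c_n = ∑_{η ∈ Ω_n} ∏_{j=1}^n a_{k_j}^{(j)}`. -/
noncomputable def c (a : ℕ → ℕ → ℝ) (n : ℕ) : ℝ :=
  ∑ P : Nat.Partition n, ∏ j ∈ Finset.Icc 1 n, a j (Multiset.count j P.parts)

/-- The multiplicative measure `μ_n(η) = c_n⁻¹ ∏_{j=1}^n a_{k_j}^{(j)}` on partitions
of `n`, identified with their part-count functions. -/
noncomputable def mu (a : ℕ → ℕ → ℝ) (n : ℕ) (P : Nat.Partition n) : ℝ :=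
  (c a n)⁻¹ * ∏ j ∈ Finset.Icc 1 n, a j (Multiset.count j P.parts)

/-- **Reversibility of multiplicative measures** (detailed balance). Fix `n ≥ 1` and
`η ∈ Ω_n`. (Case `i ≠ j`) if `η^{(i,j)}` is obtained from `η` by merging a cluster of
size `i` with one of size `j` (so `k_i ↦ k_i − 1`, `k_j ↦ k_j − 1`,
`k_{i+j} ↦ k_{i+j} + 1`) and `u_c/u_f = a_{k_i−1}^{(i)} a_{k_j−1}^{(j)} a_{k_{i+j}+1}^{(i+j)}
/ (a_{k_i}^{(i)} a_{k_j}^{(j)} a_{k_{i+j}}^{(i+j)})` with all the `a`'s appearing positive,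
then `μ_n(η) u_c = μ_n(η^{(i,j)}) u_f`. (Case `i = j`) similarly with
`k_i ↦ k_i − 2`, `k_{2i} ↦ k_{2i} + 1` and
`u_c/u_f = a_{k_i−2}^{(i)} a_{k_{2i}+1}^{(2i)} / (a_{k_i}^{(i)} a_{k_{2i}}^{(2i)})`. -/
lemma prod_swap_aux (f g : ℕ → ℝ) (S T : Finset ℕ) (hT : T ⊆ S)
    (hfg : ∀ m ∈ S, m ∉ T → g m = f m) :
    (∏ m ∈ S, g m) * ∏ m ∈ T, f m = (∏ m ∈ S, f m) * ∏ m ∈ T, g m := by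
  rw [← Finset.prod_sdiff hT (f := g), ← Finset.prod_sdiff hT (f := f),
    Finset.prod_congr rfl
      (fun m hm => hfg m (Finset.mem_sdiff.mp hm).1 (Finset.mem_sdiff.mp hm).2)]
  ring

theorem stmt10 (a : ℕ → ℕ → ℝ)
    (hnn : ∀ j k, 0 ≤ a j k) (h0 : ∀ j, 1 ≤ j → 0 < a j 0)
    (hc : ∀ n, 1 ≤ n → 0 < c a n)
    (n : ℕ) (hn : 1 ≤ n) (P : Nat.Partition n) :
    (∀ i j : ℕ, ∀ Q : Nat.Partition n, ∀ uc uf : ℝ,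
      1 ≤ i → 1 ≤ j → i ≠ j → i + j ≤ n →
      1 ≤ Multiset.count i P.parts → 1 ≤ Multiset.count j P.parts →
      Multiset.count i Q.parts = Multiset.count i P.parts - 1 →
      Multiset.count j Q.parts = Multiset.count j P.parts - 1 →
      Multiset.count (i + j) Q.parts = Multiset.count (i + j) P.parts + 1 →
      (∀ m : ℕ, m ≠ i → m ≠ j → m ≠ i + j →
        Multiset.count m Q.parts = Multiset.count m P.parts) →
      0 < uc → 0 < uf →
      0 < a i (Multiset.count i P.parts) →
      0 < a j (Multiset.count j P.parts) →
      0 < a (i + j) (Multiset.count (i + j) P.parts) →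
      0 < a i (Multiset.count i P.parts - 1) →
      0 < a j (Multiset.count j P.parts - 1) →
      0 < a (i + j) (Multiset.count (i + j) P.parts + 1) →
      uc / uf
        = a i (Multiset.count i P.parts - 1) * a j (Multiset.count j P.parts - 1)
            * a (i + j) (Multiset.count (i + j) P.parts + 1)
          / (a i (Multiset.count i P.parts) * a j (Multiset.count j P.parts)
            * a (i + j) (Multiset.count (i + j) P.parts)) →
      mu a n P * uc = mu a n Q * uf) ∧
    (∀ i : ℕ, ∀ Q : Nat.Partition n, ∀ uc uf : ℝ,
      1 ≤ i → i + i ≤ n →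
      2 ≤ Multiset.count i P.parts →
      Multiset.count i Q.parts = Multiset.count i P.parts - 2 →
      Multiset.count (2 * i) Q.parts = Multiset.count (2 * i) P.parts + 1 →
      (∀ m : ℕ, m ≠ i → m ≠ 2 * i →
        Multiset.count m Q.parts = Multiset.count m P.parts) →
      0 < uc → 0 < uf →
      0 < a i (Multiset.count i P.parts) →
      0 < a (2 * i) (Multiset.count (2 * i) P.parts) →
      0 < a i (Multiset.count i P.parts - 2) →
      0 < a (2 * i) (Multiset.count (2 * i) P.parts + 1) →
      uc / uf
        = a i (Multiset.count i P.parts - 2)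
            * a (2 * i) (Multiset.count (2 * i) P.parts + 1)
          / (a i (Multiset.count i P.parts)
            * a (2 * i) (Multiset.count (2 * i) P.parts)) →
      mu a n P * uc = mu a n Q * uf) := by
  
  constructor
  · intro i j Q uc uf hi hj hij hijn hki hkj hQi hQj hQij hQm huc huf hai haj haij hai' haj' haij' hratio
    set f : ℕ → ℝ := fun m => a m (Multiset.count m P.parts) with hf
    set g : ℕ → ℝ := fun m => a m (Multiset.count m Q.parts) with hg
    set T : Finset ℕ := {i, j, i + j} with hTdef
    have hT : T ⊆ Finset.Icc 1 n := by
      intro m hm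
      simp only [hTdef, Finset.mem_insert, Finset.mem_singleton] at hm
      rw [Finset.mem_Icc]
      rcases hm with rfl | rfl | rfl <;> omega
    have key := prod_swap_aux f g (Finset.Icc 1 n) T hT (by
      intro m _ hmT
      simp only [hTdef, Finset.mem_insert, Finset.mem_singleton, not_or] at hmT
      simp only [hf, hg, hQm m hmT.1 hmT.2.1 hmT.2.2])
    have hTf : ∏ m ∈ T, f m = f i * f j * f (i + j) := by
      rw [hTdef, Finset.prod_insert (by simp; omega), Finset.prod_insert (by simp; omega),
        Finset.prod_singleton, mul_assoc]
    have hTg : ∏ m ∈ T, g m = g i * g j * g (i + j) := by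
      rw [hTdef, Finset.prod_insert (by simp; omega), Finset.prod_insert (by simp; omega),
        Finset.prod_singleton, mul_assoc]
    have hgi : g i = a i (Multiset.count i P.parts - 1) := by rw [hg]; simp only [hQi]
    have hgj : g j = a j (Multiset.count j P.parts - 1) := by rw [hg]; simp only [hQj]
    have hgij : g (i + j) = a (i + j) (Multiset.count (i + j) P.parts + 1) := by
      rw [hg]; simp only [hQij]
    have hB : (0 : ℝ) < f i * f j * f (i + j) := mul_pos (mul_pos hai haj) haij
    rw [div_eq_div_iff huf.ne' (by exact (mul_pos (mul_pos hai haj) haij).ne')] at hratio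
    have hr : uc * (f i * f j * f (i + j)) = uf * (g i * g j * g (i + j)) := by
      rw [hgi, hgj, hgij, hratio]; ring
    have key2 : (∏ m ∈ Finset.Icc 1 n, f m) * uc = (∏ m ∈ Finset.Icc 1 n, g m) * uf := by
      have hcancel : ((∏ m ∈ Finset.Icc 1 n, f m) * uc) * (∏ m ∈ T, f m)
          = ((∏ m ∈ Finset.Icc 1 n, g m) * uf) * (∏ m ∈ T, f m) := by
        rw [hTf]
        calc ((∏ m ∈ Finset.Icc 1 n, f m) * uc) * (f i * f j * f (i + j))
            = (∏ m ∈ Finset.Icc 1 n, f m) * (uc * (f i * f j * f (i + j))) := by ring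
          _ = (∏ m ∈ Finset.Icc 1 n, f m) * (uf * (g i * g j * g (i + j))) := by rw [hr]
          _ = uf * ((∏ m ∈ Finset.Icc 1 n, f m) * (∏ m ∈ T, g m)) := by rw [hTg]; ring
          _ = uf * ((∏ m ∈ Finset.Icc 1 n, g m) * (∏ m ∈ T, f m)) := by rw [← key]
          _ = ((∏ m ∈ Finset.Icc 1 n, g m) * uf) * (f i * f j * f (i + j)) := by
              rw [hTf]; ring
      exact mul_right_cancel₀ (by rw [hTf]; exact hB.ne') hcancel
    simp only [mu]
    linear_combination (c a n)⁻¹ * key2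
  · intro i Q uc uf hi hin hki hQi hQ2i hQm huc huf hai ha2i hai' ha2i' hratio
    set f : ℕ → ℝ := fun m => a m (Multiset.count m P.parts) with hf
    set g : ℕ → ℝ := fun m => a m (Multiset.count m Q.parts) with hg
    set T : Finset ℕ := {i, 2 * i} with hTdef
    have hT : T ⊆ Finset.Icc 1 n := by
      intro m hm
      simp only [hTdef, Finset.mem_insert, Finset.mem_singleton] at hm
      rw [Finset.mem_Icc]
      rcases hm with rfl | rfl <;> omega
    have key := prod_swap_aux f g (Finset.Icc 1 n) T hT (by
      intro m _ hmT
      simp only [hTdef, Finset.mem_insert, Finset.mem_singleton, not_or] at hmT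
      simp only [hf, hg, hQm m hmT.1 hmT.2])
    have hTf : ∏ m ∈ T, f m = f i * f (2 * i) := by
      rw [hTdef, Finset.prod_insert (by simp; omega), Finset.prod_singleton]
    have hTg : ∏ m ∈ T, g m = g i * g (2 * i) := by
      rw [hTdef, Finset.prod_insert (by simp; omega), Finset.prod_singleton]
    have hgi : g i = a i (Multiset.count i P.parts - 2) := by rw [hg]; simp only [hQi]
    have hg2i : g (2 * i) = a (2 * i) (Multiset.count (2 * i) P.parts + 1) := by
      rw [hg]; simp only [hQ2i]
    have hB : (0 : ℝ) < f i * f (2 * i) := mul_pos hai ha2i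
    rw [div_eq_div_iff huf.ne' (mul_pos hai ha2i).ne'] at hratio
    have hr : uc * (f i * f (2 * i)) = uf * (g i * g (2 * i)) := by
      rw [hgi, hg2i, hratio]; ring
    have key2 : (∏ m ∈ Finset.Icc 1 n, f m) * uc = (∏ m ∈ Finset.Icc 1 n, g m) * uf := by
      have hcancel : ((∏ m ∈ Finset.Icc 1 n, f m) * uc) * (∏ m ∈ T, f m)
          = ((∏ m ∈ Finset.Icc 1 n, g m) * uf) * (∏ m ∈ T, f m) := by
        rw [hTf]
        calc ((∏ m ∈ Finset.Icc 1 n, f m) * uc) * (f i * f (2 * i))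
            = (∏ m ∈ Finset.Icc 1 n, f m) * (uc * (f i * f (2 * i))) := by ring
          _ = (∏ m ∈ Finset.Icc 1 n, f m) * (uf * (g i * g (2 * i))) := by rw [hr]
          _ = uf * ((∏ m ∈ Finset.Icc 1 n, f m) * (∏ m ∈ T, g m)) := by rw [hTg]; ring
          _ = uf * ((∏ m ∈ Finset.Icc 1 n, g m) * (∏ m ∈ T, f m)) := by rw [← key]
          _ = ((∏ m ∈ Finset.Icc 1 n, g m) * uf) * (f i * f (2 * i)) := by rw [hTf]; ring
      exact mul_right_cancel₀ (by rw [hTf]; exact hB.ne') hcancel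
    simp only [mu]
    linear_combination (c a n)⁻¹ * key2
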